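/- Let U be a finite-dimensional real vector space equipped with two symmetric bilinear forms B₁ and B₂, where B₁ is positive semidefinite and B₂ is negative semidefinite. Then there exists a basis of U that is orthogonal with respect to both B₁ and B₂ simultaneously. -/

import Mathlib

section Aux

variable {V : Type*} [AddCommGroup V] [Module ℝ V]

/-- Degenerate Cauchy–Schwarz: for a positive semidefinite symmetric bilinear form,
a vector with zero "norm" pairs to zero with everything. -/
lemma psd_apply_eq_zero (B : LinearMap.BilinForm ℝ V) (hsymm : B.IsSymm)
    (hpos : ∀ v, 0 ≤ B v v) {v : V} (hv : B v v = 0) (w : V) : B v w = 0 := by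
  have hsym : B w v = B v w := hsymm.eq w v
  have key : ∀ t : ℝ, 0 ≤ 2 * t * B v w + t ^ 2 * B w w := by
    intro t
    have h := hpos (v + t • w)
    simp only [map_add, map_smul, LinearMap.add_apply, LinearMap.smul_apply,
      smul_eq_mul] at h
    rw [hv, hsym] at h
    nlinarith [h]
  rcases eq_or_lt_of_le (hpos w) with hw | hw
  · have h1 := key 1
    have h2 := key (-1)
    nlinarith
  · have h := key (-(B v w) / B w w)
    have hne : B w w ≠ 0 := ne_of_gt hw
    have e1 : 2 * (-(B v w) / B w w) * B v w + (-(B v w) / B w w) ^ 2 * B w w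
        = -(B v w ^ 2 / B w w) := by
      field_simp
      ring
    rw [e1] at h
    have h4 : B v w ^ 2 / B w w ≤ 0 := by linarith
    have h5 : 0 ≤ B v w ^ 2 / B w w := div_nonneg (sq_nonneg _) (le_of_lt hw)
    have h6 : B v w ^ 2 / B w w = 0 := le_antisymm h4 h5
    have h7 : B v w ^ 2 = 0 := by
      rwa [div_eq_zero_iff, or_iff_left hne] at h6
    exact pow_eq_zero_iff (two_ne_zero) |>.mp h7

end Aux

/-- A finite-dimensional real vector space with a positive semidefinite symmetric
bilinear form `B₁` and a negative semidefinite symmetric bilinear form `B₂` admits a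
basis which is simultaneously orthogonal for both forms. -/
theorem simultaneous_orthogonal_basis
    (U : Type*) [AddCommGroup U] [Module ℝ U] [FiniteDimensional ℝ U]
    (B₁ B₂ : LinearMap.BilinForm ℝ U)
    (hB₁symm : B₁.IsSymm) (hB₂symm : B₂.IsSymm)
    (hB₁pos : ∀ v : U, 0 ≤ B₁ v v) (hB₂neg : ∀ v : U, B₂ v v ≤ 0) :
    ∃ b : Module.Basis (Fin (Module.finrank ℝ U)) ℝ U,
      ∀ i j, i ≠ j → B₁ (b i) (b j) = 0 ∧ B₂ (b i) (b j) = 0 := by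
  classical
  set Q : LinearMap.BilinForm ℝ U := B₁ - B₂ with hQdef
  have hQapp : ∀ v w : U, Q v w = B₁ v w - B₂ v w := by
    intro v w; simp [hQdef]
  have hQsymm : Q.IsSymm := by
    constructor; intro x y
    simp only [RingHom.id_apply, hQapp]
    rw [← hB₁symm.eq x y, ← hB₂symm.eq x y]
  have hQpos : ∀ v : U, 0 ≤ Q v v := by
    intro v; rw [hQapp]; linarith [hB₁pos v, hB₂neg v]
  -- vectors in the kernel of Q pair to zero with everything, for both forms
  have hker : ∀ v : U, v ∈ LinearMap.ker Q → ∀ w : U, B₁ v w = 0 ∧ B₂ v w = 0 := by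
    intro v hv w
    rw [LinearMap.mem_ker] at hv
    have hQvv : Q v v = 0 := by rw [hv]; rfl
    have hB₁vv : B₁ v v = 0 := by
      have := hQapp v v
      rw [hQvv] at this
      linarith [hB₁pos v, hB₂neg v]
    have hB₂vv : B₂ v v = 0 := by
      have := hQapp v v
      rw [hQvv] at this
      linarith [hB₁pos v, hB₂neg v]
    constructor
    · exact psd_apply_eq_zero B₁ hB₁symm hB₁pos hB₁vv w
    · have hnegpos : ∀ u : U, 0 ≤ (-B₂) u u := by
        intro u; simp [hB₂neg u]
      have hnegsymm : (-B₂).IsSymm := by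
        constructor; intro x y; simp [← hB₂symm.eq x y]
      have : (-B₂) v w = 0 :=
        psd_apply_eq_zero (-B₂) hnegsymm hnegpos (by simp [hB₂vv]) w
      simpa using this
  have hQker : ∀ v : U, Q v v = 0 → v ∈ LinearMap.ker Q := by
    intro v hv
    rw [LinearMap.mem_ker]
    ext w
    exact psd_apply_eq_zero Q hQsymm hQpos hv w
  -- choose a complement W of the kernel
  obtain ⟨W, hW⟩ := Submodule.exists_isCompl (LinearMap.ker Q)
  set QW : LinearMap.BilinForm ℝ W := Q.restrict W with hQWdef
  set BW : LinearMap.BilinForm ℝ W := B₁.restrict W with hBWdef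
  have hQWapp : ∀ x y : W, QW x y = Q x y := fun x y => rfl
  have hBWapp : ∀ x y : W, BW x y = B₁ x y := fun x y => rfl
  have hWdef : ∀ x : W, QW x x = 0 → x = 0 := by
    intro x hx
    have hx' : (x : U) ∈ LinearMap.ker Q := hQker x hx
    have : (x : U) ∈ (LinearMap.ker Q) ⊓ W := ⟨hx', x.2⟩
    rw [hW.inf_eq_bot] at this
    exact Subtype.ext this
  -- the inner product space structure on W given by Q
  let c : InnerProductSpace.Core ℝ W :=
  { inner := fun x y => QW x y
    conj_inner_symm := fun x y => by
      simpa [hQWapp] using (hQsymm.eq (y : U) (x : U))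
    re_inner_nonneg := fun x => by simpa [hQWapp] using hQpos (x : U)
    definite := fun x hx => hWdef x hx
    add_left := fun x y z => by simp [hQWapp]
    smul_left := fun x y r => by simp [hQWapp] }
  letI : NormedAddCommGroup W := c.toNormedAddCommGroup
  letI : InnerProductSpace ℝ W := InnerProductSpace.ofCore c.toCore
  have hinner : ∀ x y : W, (inner ℝ x y : ℝ) = QW x y := fun x y => rfl
  -- Q is nondegenerate on W
  have hQWnd : QW.Nondegenerate := by
    refine ⟨fun x hx => hWdef x (hx x), ?_⟩
    intro x hx
    exact hWdef x (hx x)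
  -- the operator T representing B₁ with respect to Q on W
  set T : W →ₗ[ℝ] W := ((QW.toDual hQWnd).symm.toLinearMap) ∘ₗ BW with hTdef
  have hTapp : ∀ x y : W, QW (T x) y = BW x y := by
    intro x y
    simp only [hTdef, LinearMap.coe_comp, Function.comp_apply, LinearEquiv.coe_coe]
    exact LinearMap.BilinForm.apply_toDual_symm_apply (B := QW) (hB := hQWnd) (BW x) y
  have hTsymm : T.IsSymmetric := by
    intro x y
    rw [hinner, hinner, hTapp]
    have h1 : QW x (T y) = QW (T y) x := by
      simpa [hQWapp] using (hQsymm.eq ((T y : W) : U) (x : U)).symm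
    rw [h1, hTapp, hBWapp, hBWapp]
    exact (hB₁symm.eq (x : U) (y : U))
  -- spectral theorem: orthonormal eigenbasis for T on W
  set m := Module.finrank ℝ W with hm
  set obW : OrthonormalBasis (Fin m) ℝ W := hTsymm.eigenvectorBasis rfl with hobW
  have hortho : ∀ i j : Fin m, i ≠ j → QW (obW i) (obW j) = 0 := by
    intro i j hij
    rw [← hinner]
    exact obW.orthonormal.2 hij
  have hB₁W : ∀ i j : Fin m, i ≠ j → BW (obW i) (obW j) = 0 := by
    intro i j hij
    have hev := (hTsymm.hasEigenvector_eigenvectorBasis rfl i).apply_eq_smul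
    rw [← hTapp, ← hobW] at *
    rw [hev, map_smul, LinearMap.smul_apply, smul_eq_mul, hortho i j hij, mul_zero]
  -- assemble the basis
  set r := Module.finrank ℝ (LinearMap.ker Q) with hr
  set bR : Module.Basis (Fin r) ℝ (LinearMap.ker Q) := Module.finBasis ℝ _ with hbR
  set c0 : Module.Basis (Fin r ⊕ Fin m) ℝ U :=
    (bR.prod obW.toBasis).map (Submodule.prodEquivOfIsCompl _ W hW) with hc0
  have hc0l : ∀ k : Fin r, c0 (Sum.inl k) = (bR k : U) := by
    intro k
    rw [hc0]
    simp [Module.Basis.map_apply, Module.Basis.prod_apply, Submodule.coe_prodEquivOfIsCompl']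
  have hc0r : ∀ k : Fin m, c0 (Sum.inr k) = (obW.toBasis k : U) := by
    intro k
    rw [hc0]
    simp [Module.Basis.map_apply, Module.Basis.prod_apply, Submodule.coe_prodEquivOfIsCompl']
  have hkey : ∀ i j, i ≠ j → B₁ (c0 i) (c0 j) = 0 ∧ B₂ (c0 i) (c0 j) = 0 := by
    intro i j hij
    rcases i with k | k
    · rw [hc0l k]
      exact hker _ (bR k).2 _
    · rcases j with l | l
      · rw [hc0l l]
        have h := hker _ (bR l).2 (c0 (Sum.inr k))
        constructor
        · have hsym := hB₁symm.eq (c0 (Sum.inr k)) ((bR l : U))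
          rw [hsym]; exact h.1
        · have hsym := hB₂symm.eq (c0 (Sum.inr k)) ((bR l : U))
          rw [hsym]; exact h.2
      · have hkl : k ≠ l := fun h => hij (by rw [h])
        rw [hc0r k, hc0r l, OrthonormalBasis.coe_toBasis]
        have h1 : B₁ (obW k : U) (obW l : U) = 0 := by
          rw [← hBWapp]; exact hB₁W k l hkl
        have hq : Q (obW k : U) (obW l : U) = 0 := by
          rw [← hQWapp]; exact hortho k l hkl
        have h2 : B₂ (obW k : U) (obW l : U) = 0 := by
          have := hQapp (obW k : U) (obW l : U)
          rw [hq, h1] at this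
          linarith
        exact ⟨h1, h2⟩
  have hrm : r + m = Module.finrank ℝ U := Submodule.finrank_add_eq_of_isCompl hW
  let e : (Fin r ⊕ Fin m) ≃ Fin (Module.finrank ℝ U) :=
    finSumFinEquiv.trans (finCongr hrm)
  refine ⟨c0.reindex e, fun i j hij => ?_⟩
  have hne : e.symm i ≠ e.symm j := fun h => hij (e.symm.injective h)
  have := hkey (e.symm i) (e.symm j) hne
  simpa [Module.Basis.reindex_apply] using this
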